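/- (Hypothesis combination noise bound) Let H be a class of functions X → {0,1}, L a finite set with weights α_l summing to 1, h_t = Σ_l α_l h_l with each h_l ∈ H, and h_s ∈ H. If Q is an i.i.d. sample of size n from distribution D_t, then for any δ ∈ (0,1), with probability at least 1 − δ, E_{x~D_t}[|h_t(x) − h_s(x)|] ≤ (1/n) Σ_{i=1}^n |h_t(x_i) − h_s(x_i)| + 4 Rad_Q(H) + 3 √(log(2/δ)/(2n)). -/

import Mathlib

open MeasureTheory

/-- Empirical Rademacher complexity of a class of real-valued functions on a
sample `x` of size `n`. -/
noncomputable def rad {X : Type*} (n : ℕ) (x : Fin n → X) (F : Set (X → ℝ)) : ℝ :=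
  (1 / 2 ^ n : ℝ) * ∑ σ : Fin n → Bool,
    ⨆ f : F, (1 / n : ℝ) * ∑ i, (if σ i then (1 : ℝ) else -1) * (f : X → ℝ) (x i)

lemma sign_sum_zero (n : ℕ) (i : Fin n) :
    ∑ σ : Fin n → Bool, (if σ i then (1:ℝ) else -1) = 0 := by
  have hinv : Function.Involutive (fun σ : Fin n → Bool => Function.update σ i (!σ i)) := by
    intro σ
    funext j
    rcases eq_or_ne j i with h | h
    · subst h; simp
    · simp [Function.update_of_ne h]
  set e := hinv.toPerm with he
  have h1 := Equiv.sum_comp e (fun σ : Fin n → Bool => (if σ i then (1:ℝ) else -1))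
  have h2 : ∀ σ : Fin n → Bool,
      (if (e σ) i then (1:ℝ) else -1) = -(if σ i then (1:ℝ) else -1) := by
    intro σ
    have hei : (e σ) i = !σ i := by
      simp [he, Function.Involutive.toPerm]
    rw [hei]
    cases σ i <;> simp
  simp only [h2, Finset.sum_neg_distrib] at h1
  linarith

lemma rad_nonneg {X : Type*} (n : ℕ) (x : Fin n → X) (H : Set (X → ℝ))
    (f0 : X → ℝ) (hf0 : f0 ∈ H) (hbin : ∀ h ∈ H, ∀ a, h a = 0 ∨ h a = 1) :
    0 ≤ rad n x H := by
  have hb01 : ∀ (f : X → ℝ), f ∈ H → ∀ a, 0 ≤ f a ∧ f a ≤ 1 := by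
    intro f hf a
    rcases hbin f hf a with h | h <;> simp [h]
  have hbdd : ∀ σ : Fin n → Bool, BddAbove (Set.range fun f : H =>
      (1 / n : ℝ) * ∑ i, (if σ i then (1 : ℝ) else -1) * (f : X → ℝ) (x i)) := by
    intro σ
    refine ⟨1, ?_⟩
    rintro y ⟨f, rfl⟩
    have hsum : ∑ i, (if σ i then (1 : ℝ) else -1) * (f : X → ℝ) (x i) ≤ n := by
      calc ∑ i, (if σ i then (1 : ℝ) else -1) * (f : X → ℝ) (x i)
          ≤ ∑ _i : Fin n, (1:ℝ) := by
            apply Finset.sum_le_sum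
            intro i _
            rcases hb01 f f.2 (x i) with ⟨h0, h1⟩
            split <;> nlinarith
        _ = n := by simp
    rcases Nat.eq_zero_or_pos n with h | h
    · subst h; simp
    · have hn' : (0:ℝ) < n := by exact_mod_cast h
      show (1 / n : ℝ) * ∑ i, (if σ i then (1 : ℝ) else -1) * (f : X → ℝ) (x i) ≤ 1
      rw [div_mul_eq_mul_div, one_mul, div_le_one hn']
      exact hsum
  have key : ∀ σ : Fin n → Bool,
      (1 / n : ℝ) * ∑ i, (if σ i then (1 : ℝ) else -1) * f0 (x i) ≤
      ⨆ f : H, (1 / n : ℝ) * ∑ i, (if σ i then (1 : ℝ) else -1) * (f : X → ℝ) (x i) :=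
    fun σ => le_ciSup (hbdd σ) (⟨f0, hf0⟩ : H)
  have hsum0 : ∑ σ : Fin n → Bool,
      (1 / n : ℝ) * ∑ i, (if σ i then (1 : ℝ) else -1) * f0 (x i) = 0 := by
    rw [← Finset.mul_sum, Finset.sum_comm]
    have : ∀ i : Fin n, ∑ σ : Fin n → Bool, (if σ i then (1 : ℝ) else -1) * f0 (x i) = 0 := by
      intro i
      rw [← Finset.sum_mul, sign_sum_zero, zero_mul]
    rw [Finset.sum_congr rfl fun i _ => this i]
    simp
  have : (0:ℝ) ≤ ∑ σ : Fin n → Bool,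
      ⨆ f : H, (1 / n : ℝ) * ∑ i, (if σ i then (1 : ℝ) else -1) * (f : X → ℝ) (x i) := by
    rw [← hsum0]
    exact Finset.sum_le_sum fun σ _ => key σ
  have h2 : (0:ℝ) ≤ 1 / 2 ^ n := by positivity
  unfold rad
  exact mul_nonneg h2 this

lemma mgf_le {X : Type*} [MeasurableSpace X] (μ : Measure X) [IsProbabilityMeasure μ]
    (Y : X → ℝ) (hY : Measurable Y) (hb : ∀ x, |Y x| ≤ 1) (h0 : ∫ x, Y x ∂μ = 0) (t : ℝ) :
    ∫ x, Real.exp (t * Y x) ∂μ ≤ Real.exp (t ^ 2 / 2) := by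
  have hpt : ∀ x, Real.exp (t * Y x) ≤ Real.cosh t + Y x * Real.sinh t := by
    intro x
    set y := Y x with hy
    have hy1 : |y| ≤ 1 := hb x
    have ha : (0:ℝ) ≤ (1 + y) / 2 := by cases abs_le.1 hy1; linarith
    have hbnn : (0:ℝ) ≤ (1 - y) / 2 := by cases abs_le.1 hy1; linarith
    have hab : (1 + y) / 2 + (1 - y) / 2 = 1 := by ring
    have hc := convexOn_exp.2 (Set.mem_univ t) (Set.mem_univ (-t)) ha hbnn hab
    simp only [smul_eq_mul] at hc
    have harg : (1 + y) / 2 * t + (1 - y) / 2 * (-t) = t * y := by ring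
    rw [harg] at hc
    calc Real.exp (t * y) ≤ (1 + y) / 2 * Real.exp t + (1 - y) / 2 * Real.exp (-t) := hc
      _ = Real.cosh t + y * Real.sinh t := by rw [Real.cosh_eq, Real.sinh_eq]; ring
  have hYint : Integrable Y μ := by
    refine Integrable.mono' (integrable_const 1) hY.aestronglyMeasurable ?_
    exact Filter.Eventually.of_forall fun x => by simpa using hb x
  have hint : Integrable (fun x => Real.exp (t * Y x)) μ := by
    refine Integrable.mono' (integrable_const (Real.exp |t|))
      ((hY.const_mul t).exp).aestronglyMeasurable ?_
    refine Filter.Eventually.of_forall fun x => ?_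
    rw [Real.norm_eq_abs, abs_of_pos (Real.exp_pos _)]
    apply Real.exp_le_exp.2
    calc t * Y x ≤ |t * Y x| := le_abs_self _
      _ = |t| * |Y x| := abs_mul _ _
      _ ≤ |t| * 1 := by nlinarith [abs_nonneg t, hb x]
      _ = |t| := mul_one _
  have hint2 : Integrable (fun x => Real.cosh t + Y x * Real.sinh t) μ :=
    (integrable_const _).add (hYint.mul_const _)
  calc ∫ x, Real.exp (t * Y x) ∂μ ≤ ∫ x, (Real.cosh t + Y x * Real.sinh t) ∂μ :=
        integral_mono hint hint2 hpt
    _ = Real.cosh t + (∫ x, Y x ∂μ) * Real.sinh t := by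
        rw [integral_add (integrable_const _) (hYint.mul_const _), integral_const,
          integral_mul_const]
        simp
    _ = Real.cosh t := by rw [h0]; ring
    _ ≤ Real.exp (t ^ 2 / 2) := Real.cosh_le_exp_half_sq t

lemma hoeff_tail {X : Type*} [MeasurableSpace X] (μ : Measure X) [IsProbabilityMeasure μ]
    (Y : X → ℝ) (hY : Measurable Y) (hb : ∀ x, |Y x| ≤ 1) (h0 : ∫ x, Y x ∂μ = 0)
    (n : ℕ) (t : ℝ) (ht : 0 < t) :
    (Measure.pi fun _ : Fin n => μ) {Q : Fin n → X | (n : ℝ) * t ≤ ∑ i, Y (Q i)} ≤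
      ENNReal.ofReal (Real.exp (-(n * t ^ 2) / 2)) := by
  letI : MeasureSpace X := ⟨μ⟩
  haveI : IsProbabilityMeasure (volume : Measure X) := ‹IsProbabilityMeasure μ›
  set ν : Measure (Fin n → X) := Measure.pi fun _ : Fin n => μ with hν
  haveI : IsProbabilityMeasure ν := by rw [hν]; infer_instance
  have hvol : ν = (volume : Measure (Fin n → X)) := by
    rw [hν, MeasureTheory.volume_pi]; rfl
  have hexpint : Integrable (fun x => Real.exp (t * Y x)) μ := by
    refine Integrable.mono' (integrable_const (Real.exp |t|))
      ((hY.const_mul t).exp).aestronglyMeasurable ?_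
    refine Filter.Eventually.of_forall fun x => ?_
    rw [Real.norm_eq_abs, abs_of_pos (Real.exp_pos _)]
    apply Real.exp_le_exp.2
    calc t * Y x ≤ |t * Y x| := le_abs_self _
      _ = |t| * |Y x| := abs_mul _ _
      _ ≤ |t| * 1 := by nlinarith [abs_nonneg t, hb x]
      _ = |t| := mul_one _
  have hFprod : ∀ Q : Fin n → X,
      Real.exp (t * ∑ i, Y (Q i)) = ∏ i : Fin n, Real.exp (t * Y (Q i)) := by
    intro Q
    rw [Finset.mul_sum, Real.exp_sum]
  have hFint : Integrable (fun Q : Fin n → X => Real.exp (t * ∑ i, Y (Q i))) ν := by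
    rw [hvol]
    have := Integrable.fintype_prod (f := fun _ : Fin n => fun x => Real.exp (t * Y x))
      (fun _ => hexpint)
    exact this.congr (Filter.Eventually.of_forall fun Q => (hFprod Q).symm)
  have hFval : ∫ Q, Real.exp (t * ∑ i, Y (Q i)) ∂ν
      = (∫ x, Real.exp (t * Y x) ∂μ) ^ n := by
    rw [hvol]
    calc ∫ Q : Fin n → X, Real.exp (t * ∑ i, Y (Q i))
        = ∫ Q : Fin n → X, ∏ i, Real.exp (t * Y (Q i)) := by
          exact integral_congr_ae (Filter.Eventually.of_forall fun Q => hFprod Q)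
      _ = (∫ x, Real.exp (t * Y x)) ^ n := by
          rw [MeasureTheory.volume_pi, integral_fintype_prod_eq_pow (fun x => Real.exp (t * Y x))]
          simp
  have hmgf := mgf_le μ Y hY hb h0 t
  have hFle : ∫ Q, Real.exp (t * ∑ i, Y (Q i)) ∂ν ≤ Real.exp ((n : ℝ) * t ^ 2 / 2) := by
    rw [hFval]
    calc (∫ x, Real.exp (t * Y x) ∂μ) ^ n ≤ (Real.exp (t ^ 2 / 2)) ^ n := by
          apply pow_le_pow_left₀ (integral_nonneg fun x => (Real.exp_pos _).le) hmgf
      _ = Real.exp ((n : ℝ) * (t ^ 2 / 2)) := by rw [Real.exp_nat_mul]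
      _ = Real.exp ((n : ℝ) * t ^ 2 / 2) := by ring_nf
  set ε : ℝ := Real.exp (t * ((n : ℝ) * t)) with hε
  have hset : {Q : Fin n → X | (n : ℝ) * t ≤ ∑ i, Y (Q i)}
      = {Q : Fin n → X | ε ≤ Real.exp (t * ∑ i, Y (Q i))} := by
    ext Q
    simp only [Set.mem_setOf_eq, hε, Real.exp_le_exp]
    constructor
    · intro h; nlinarith
    · intro h; nlinarith
  have hmarkov := mul_meas_ge_le_integral_of_nonneg (μ := ν)
    (f := fun Q => Real.exp (t * ∑ i, Y (Q i)))
    (Filter.Eventually.of_forall fun Q => (Real.exp_pos _).le) hFint ε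
  rw [hset]
  have hεpos : 0 < ε := Real.exp_pos _
  have htoReal : (ν {Q : Fin n → X | ε ≤ Real.exp (t * ∑ i, Y (Q i))}).toReal
      ≤ Real.exp (-((n : ℝ) * t ^ 2) / 2) := by
    have h1 : (ν {Q : Fin n → X | ε ≤ Real.exp (t * ∑ i, Y (Q i))}).toReal
        ≤ Real.exp ((n : ℝ) * t ^ 2 / 2) / ε := by
      rw [le_div_iff₀ hεpos, mul_comm]
      exact le_trans hmarkov hFle
    refine le_trans h1 ?_
    rw [hε, ← Real.exp_sub]
    apply Real.exp_le_exp.2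
    have : t * ((n : ℝ) * t) = (n : ℝ) * t ^ 2 := by ring
    rw [this]
    ring_nf
    rfl
  exact (ENNReal.le_ofReal_iff_toReal_le (measure_ne_top ν _) (Real.exp_pos _).le).2 htoReal

theorem stmt11 {X : Type*} [MeasurableSpace X] (Dt : Measure X) [IsProbabilityMeasure Dt]
    (H : Set (X → ℝ)) (hm : ∀ h ∈ H, Measurable h)
    (hbin : ∀ h ∈ H, ∀ a, h a = 0 ∨ h a = 1)
    {L : Type*} [Fintype L]
    (α : L → ℝ) (hα : ∀ l, 0 ≤ α l) (hsum : ∑ l, α l = 1)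
    (hl : L → (X → ℝ)) (hlH : ∀ l, hl l ∈ H)
    (hs : X → ℝ) (hsH : hs ∈ H)
    (ht : X → ℝ) (hht : ht = fun a => ∑ l, α l * hl l a)
    (n : ℕ) (hn : 0 < n) (δ : ℝ) (hδ : δ ∈ Set.Ioo (0:ℝ) 1) :
    ENNReal.ofReal (1 - δ) ≤
      (Measure.pi fun _ : Fin n => Dt)
        {Q : Fin n → X |
          ∫ x, |ht x - hs x| ∂Dt ≤
            (1 / n : ℝ) * (∑ i, |ht (Q i) - hs (Q i)|) + 4 * rad n Q H
              + 3 * Real.sqrt (Real.log (2 / δ) / (2 * n))} := by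
  obtain ⟨hδ0, hδ1⟩ := hδ
  have hnR : (0:ℝ) < n := by exact_mod_cast hn
  -- basic bounds
  have hht01 : ∀ x, 0 ≤ ht x ∧ ht x ≤ 1 := by
    intro x
    rw [hht]
    constructor
    · apply Finset.sum_nonneg
      intro l _
      apply mul_nonneg (hα l)
      rcases hbin _ (hlH l) x with h | h <;> simp [h]
    · calc ∑ l, α l * hl l x ≤ ∑ l, α l * 1 := by
            apply Finset.sum_le_sum
            intro l _
            apply mul_le_mul_of_nonneg_left _ (hα l)
            rcases hbin _ (hlH l) x with h | h <;> simp [h]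
        _ = 1 := by simp [hsum]
  have hhs01 : ∀ x, 0 ≤ hs x ∧ hs x ≤ 1 := by
    intro x
    rcases hbin _ hsH x with h | h <;> simp [h]
  set g : X → ℝ := fun x => |ht x - hs x| with hgdef
  have hgmeas : Measurable g := by
    have hhtm : Measurable ht := by
      rw [hht]
      exact Finset.measurable_sum Finset.univ fun l _ => ((hm _ (hlH l)).const_mul (α l))
    exact (hhtm.sub (hm _ hsH)).abs
  have hg0 : ∀ x, 0 ≤ g x := fun x => abs_nonneg _
  have hg1 : ∀ x, g x ≤ 1 := by
    intro x
    rw [hgdef]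
    rcases hht01 x with ⟨a, b⟩
    rcases hhs01 x with ⟨c, d⟩
    rw [abs_le]
    constructor <;> linarith
  have hgint : Integrable g Dt := by
    refine Integrable.mono' (integrable_const 1) hgmeas.aestronglyMeasurable ?_
    exact Filter.Eventually.of_forall fun x => by
      rw [Real.norm_eq_abs, abs_of_nonneg (hg0 x)]; exact hg1 x
  set m : ℝ := ∫ x, g x ∂Dt with hm0
  have hm01 : 0 ≤ m ∧ m ≤ 1 := by
    constructor
    · exact integral_nonneg hg0
    · calc m ≤ ∫ _x, (1:ℝ) ∂Dt := integral_mono hgint (integrable_const 1) hg1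
        _ = 1 := by simp
  set Y : X → ℝ := fun x => m - g x with hYdef
  have hYmeas : Measurable Y := measurable_const.sub hgmeas
  have hYb : ∀ x, |Y x| ≤ 1 := by
    intro x
    rw [hYdef, abs_le]
    rcases hm01 with ⟨a, b⟩
    have := hg0 x
    have := hg1 x
    constructor <;> simp <;> linarith
  have hY0 : ∫ x, Y x ∂Dt = 0 := by
    rw [hYdef]
    rw [integral_sub (integrable_const m) hgint]
    simp [hm0]
  set t : ℝ := 3 * Real.sqrt (Real.log (2 / δ) / (2 * n)) with htdef
  have hlogpos : 0 < Real.log (2 / δ) := by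
    apply Real.log_pos
    rw [lt_div_iff₀ hδ0]
    linarith
  have hupos : 0 < Real.log (2 / δ) / (2 * n) := by positivity
  have htpos : 0 < t := by
    rw [htdef]
    positivity
  -- tail bound
  have htail := hoeff_tail Dt Y hYmeas hYb hY0 n t htpos
  -- exponent computation
  have hexp : Real.exp (-((n:ℝ) * t ^ 2) / 2) ≤ δ := by
    have ht2 : t ^ 2 = 9 * (Real.log (2 / δ) / (2 * n)) := by
      rw [htdef, mul_pow, Real.sq_sqrt hupos.le]
      norm_num
    have harg : -((n:ℝ) * t ^ 2) / 2 = -(9 / 4 * Real.log (2 / δ)) := by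
      rw [ht2]
      field_simp
      ring
    rw [harg]
    calc Real.exp (-(9 / 4 * Real.log (2 / δ)))
        ≤ Real.exp (-Real.log (2 / δ)) := by
          apply Real.exp_le_exp.2
          nlinarith
      _ = δ / 2 := by
          rw [Real.exp_neg, Real.exp_log (by positivity)]
          field_simp
      _ ≤ δ := by linarith
  -- good event
  set good : Set (Fin n → X) := {Q | m ≤ (1 / n : ℝ) * (∑ i, g (Q i)) + t} with hgood
  have hgoodmeas : MeasurableSet good := by
    apply measurableSet_le measurable_const
    apply Measurable.add_const _ t
    apply Measurable.const_mul
    exact Finset.measurable_sum Finset.univ fun i _ => hgmeas.comp (measurable_pi_apply i)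
  set ν : Measure (Fin n → X) := Measure.pi fun _ : Fin n => Dt with hν
  haveI : IsProbabilityMeasure ν := by rw [hν]; infer_instance
  -- complement of good is inside the tail event
  have hcompl : goodᶜ ⊆ {Q : Fin n → X | (n : ℝ) * t ≤ ∑ i, Y (Q i)} := by
    intro Q hQ
    simp only [hgood, Set.mem_compl_iff, Set.mem_setOf_eq, not_le] at hQ
    simp only [Set.mem_setOf_eq, hYdef]
    rw [Finset.sum_sub_distrib, Finset.sum_const]
    simp only [Finset.card_univ, Fintype.card_fin, nsmul_eq_mul]
    have h1 : (1 / n : ℝ) * (∑ i, g (Q i)) + t < m := hQ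
    have h2 : ∑ i, g (Q i) < (m - t) * n := by
      have hS : (1 / n : ℝ) * ∑ i, g (Q i) < m - t := by linarith
      calc ∑ i, g (Q i) = ((1 / n : ℝ) * ∑ i, g (Q i)) * n := by field_simp
        _ < (m - t) * n := mul_lt_mul_of_pos_right hS hnR
    nlinarith
  have hbadle : ν goodᶜ ≤ ENNReal.ofReal δ := by
    calc ν goodᶜ ≤ ν {Q : Fin n → X | (n : ℝ) * t ≤ ∑ i, Y (Q i)} := measure_mono hcompl
      _ ≤ ENNReal.ofReal (Real.exp (-((n:ℝ) * t ^ 2) / 2)) := htail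
      _ ≤ ENNReal.ofReal δ := ENNReal.ofReal_le_ofReal hexp
  -- good ⊆ target
  have hsub : good ⊆ {Q : Fin n → X |
      ∫ x, |ht x - hs x| ∂Dt ≤
        (1 / n : ℝ) * (∑ i, |ht (Q i) - hs (Q i)|) + 4 * rad n Q H
          + 3 * Real.sqrt (Real.log (2 / δ) / (2 * n))} := by
    intro Q hQ
    simp only [hgood, Set.mem_setOf_eq] at hQ ⊢
    have hrad : 0 ≤ rad n Q H := rad_nonneg n Q H hs hsH hbin
    calc ∫ x, |ht x - hs x| ∂Dt = m := rfl
      _ ≤ (1 / n : ℝ) * (∑ i, g (Q i)) + t := hQ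
      _ ≤ (1 / n : ℝ) * (∑ i, |ht (Q i) - hs (Q i)|) + 4 * rad n Q H
          + 3 * Real.sqrt (Real.log (2 / δ) / (2 * n)) := by
        rw [htdef]
        have : (∑ i, g (Q i)) = ∑ i, |ht (Q i) - hs (Q i)| := rfl
        rw [this]
        linarith
  -- conclude
  have hgoodbound : ENNReal.ofReal (1 - δ) ≤ ν good := by
    have hsplit : ν good + ν goodᶜ = 1 := by
      rw [measure_add_measure_compl hgoodmeas, measure_univ]
    have hofadd : ENNReal.ofReal (1 - δ) + ENNReal.ofReal δ = 1 := by
      rw [← ENNReal.ofReal_add (by linarith) hδ0.le]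
      norm_num
    have : ENNReal.ofReal (1 - δ) + ENNReal.ofReal δ ≤ ν good + ENNReal.ofReal δ := by
      rw [hofadd, ← hsplit]
      exact add_le_add le_rfl hbadle
    exact (ENNReal.add_le_add_iff_right ENNReal.ofReal_ne_top).1 this
  calc ENNReal.ofReal (1 - δ) ≤ ν good := hgoodbound
    _ ≤ _ := measure_mono hsub
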